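/- Let F be a finite field with Q elements and let h ∈ F[x] be a squarefree monic polynomial with factorization h = g·g_1⋯g_k into pairwise distinct monic irreducible polynomials, where deg g = m and deg g_i ≥ 1 for each i. Let B ≥ 2 be an integer, and suppose that for every 1 ≤ i ≤ k, gcd(Q^{deg g_i} − 1, Q^m − 1) is B-smooth. Let H be a subgroup of the unit group (F[x]/(h))^× such that the composite of the inclusion H ↪ (F[x]/(h))^× with the reduction-mod-g map (F[x]/(h))^× → (F[x]/(g))^× is surjective. If H is isomorphic to ℤ/d_1ℤ ⊕ ℤ/d_2ℤ ⊕ ⋯ ⊕ ℤ/d_rℤ with d_j dividing d_{j+1} for 1 ≤ j < r and r ≥ 2, then gcd(d_{r−1}, Q^m − 1) is B-smooth. -/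

import Mathlib

open Polynomial

/-- Units of a pi type. -/
def myPiUnits {ι : Type*} {M : ι → Type*} [∀ i, Monoid (M i)] :
    (∀ i, M i)ˣ ≃* ∀ i, (M i)ˣ where
  toFun u i := ⟨u.val i, u.inv i, congrFun u.val_inv i, congrFun u.inv_val i⟩
  invFun u := ⟨fun i => (u i).val, fun i => (u i).inv,
    funext fun i => (u i).val_inv, funext fun i => (u i).inv_val⟩
  left_inv u := Units.ext rfl
  right_inv u := funext fun i => Units.ext rfl
  map_mul' u v := funext fun i => Units.ext rfl

lemma myCountRoots (K : Type*) [Field K] [Finite K] (n : ℕ) (hn : 0 < n) :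
    Nat.card {u : Kˣ // u ^ n = 1} ≤ n := by
  classical
  cases nonempty_fintype K
  rw [Nat.card_eq_fintype_card, Fintype.card_subtype]
  calc (Finset.univ.filter fun u : Kˣ => u ^ n = 1).card
      ≤ Multiset.card (nthRoots n ((Units.coeHom K) 1)) :=
        card_nthRoots_subgroup_units (Units.coeHom K) (fun _ _ hab => Units.ext hab) hn 1
    _ ≤ n := by simpa using card_nthRoots n (1 : K)

lemma myQuotBasis {F : Type*} [Field F] (p : Polynomial F) (hmp : p.Monic) :
    Nonempty (Module.Basis (Fin p.natDegree) F (Polynomial F ⧸ Ideal.span {p})) :=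
  ⟨AdjoinRoot.powerBasisAux' hmp⟩

lemma myQuotFinite {F : Type*} [Field F] [Fintype F] (p : Polynomial F) (hmp : p.Monic) :
    Finite (Polynomial F ⧸ Ideal.span {p}) := by
  obtain ⟨b⟩ := myQuotBasis p hmp
  exact Finite.of_equiv _ b.equivFun.toEquiv.symm

lemma myCardUnits {F : Type*} [Field F] [Fintype F] (p : Polynomial F) (hmp : p.Monic)
    (hp : Irreducible p) :
    Nat.card (Polynomial F ⧸ Ideal.span {p})ˣ = Fintype.card F ^ p.natDegree - 1 := by
  classical
  haveI : (Ideal.span {p}).IsMaximal := PrincipalIdealRing.isMaximal_of_irreducible hp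
  letI : Field (Polynomial F ⧸ Ideal.span {p}) := Ideal.Quotient.field _
  obtain ⟨b⟩ := myQuotBasis p hmp
  haveI : Finite (Polynomial F ⧸ Ideal.span {p}) := myQuotFinite p hmp
  cases nonempty_fintype (Polynomial F ⧸ Ideal.span {p})
  rw [Nat.card_eq_fintype_card, Fintype.card_units]
  congr 1
  rw [Fintype.card_congr b.equivFun.toEquiv]
  simp [Fintype.card_fun]

lemma myZModAux (ℓ n : ℕ) (hℓ : 0 < ℓ) (hn : 0 < n) (hdd : ℓ ∣ n) :
    ∃ φ : Fin ℓ → Multiplicative (ZMod n), Function.Injective φ ∧ ∀ a, φ a ^ ℓ = 1 := by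
  haveI : NeZero n := ⟨hn.ne'⟩
  have hq : 0 < n / ℓ := Nat.div_pos (Nat.le_of_dvd hn hdd) hℓ
  have hlt : ∀ a : Fin ℓ, a.val * (n / ℓ) < n := by
    intro a
    calc a.val * (n / ℓ) < ℓ * (n / ℓ) := by
          exact Nat.mul_lt_mul_of_lt_of_le a.isLt le_rfl hq
      _ = n := Nat.mul_div_cancel' hdd
  refine ⟨fun a => Multiplicative.ofAdd ((a.val * (n / ℓ) : ℕ) : ZMod n), ?_, ?_⟩
  · intro a b hab
    have h1 : ((a.val * (n / ℓ) : ℕ) : ZMod n) = ((b.val * (n / ℓ) : ℕ) : ZMod n) :=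
      Multiplicative.ofAdd.injective hab
    have h2 := congrArg ZMod.val h1
    rw [ZMod.val_cast_of_lt (hlt a), ZMod.val_cast_of_lt (hlt b)] at h2
    exact Fin.ext (Nat.eq_of_mul_eq_mul_right hq h2)
  · intro a
    have key : (ℓ * (a.val * (n / ℓ)) : ℕ) = a.val * n := by
      rw [mul_comm ℓ, mul_assoc, Nat.div_mul_cancel hdd]
    have : (ℓ : ℕ) • ((a.val * (n / ℓ) : ℕ) : ZMod n) = 0 := by
      rw [nsmul_eq_mul, ← Nat.cast_mul, key, Nat.cast_mul, ZMod.natCast_self, mul_zero]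
    rw [← ofAdd_nsmul, this]
    rfl

set_option maxHeartbeats 1600000 in
/-- Lemma 2.2: if the subgroup `H` of `(F[x]/(h))ˣ` surjects onto `(F[x]/(g))ˣ` under
reduction mod `g`, then the second largest invariant factor of `H` has `B`-smooth gcd
with `Q^m - 1`. -/
theorem stmt1 {F : Type*} [Field F] [Fintype F]
    (h g : Polynomial F) (k : ℕ) (gi : Fin k → Polynomial F)
    (hmonich : h.Monic) (hsf : Squarefree h)
    (hfact : h = g * ∏ i, gi i)
    (hgmonic : g.Monic) (hgirr : Irreducible g)
    (hgi : ∀ i, (gi i).Monic ∧ Irreducible (gi i))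
    (hdeg : ∀ i, 1 ≤ (gi i).natDegree)
    (hinj : Function.Injective gi) (hne : ∀ i, gi i ≠ g)
    (m : ℕ) (hm : g.natDegree = m)
    (B : ℕ) (hB : 2 ≤ B)
    (hsm : ∀ i, ∀ ℓ : ℕ, ℓ.Prime →
      ℓ ∣ Nat.gcd (Fintype.card F ^ (gi i).natDegree - 1) (Fintype.card F ^ m - 1) → ℓ ≤ B)
    (H : Subgroup (Polynomial F ⧸ Ideal.span {h})ˣ)
    (hsurj : Function.Surjective (fun x : H =>
      Units.map (Ideal.Quotient.factor (S := Ideal.span {h}) (T := Ideal.span {g})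
        (Ideal.span_singleton_le_span_singleton.mpr ⟨∏ i, gi i, hfact⟩)).toMonoidHom
        (x : (Polynomial F ⧸ Ideal.span {h})ˣ)))
    (r : ℕ) (hr : 2 ≤ r) (d : Fin r → ℕ) (hd : ∀ j, 0 < d j)
    (hdvd : ∀ j : Fin r, ∀ hj : (j : ℕ) + 1 < r, d j ∣ d ⟨(j : ℕ) + 1, hj⟩)
    (hiso : Nonempty (H ≃* ((j : Fin r) → Multiplicative (ZMod (d j))))) :
    ∀ ℓ : ℕ, ℓ.Prime →
      ℓ ∣ Nat.gcd (d ⟨r - 2, by omega⟩) (Fintype.card F ^ m - 1) → ℓ ≤ B := by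
  classical
  intro ℓ hℓ hgcd
  by_cases hex : ∃ i, ℓ ∣ Fintype.card F ^ (gi i).natDegree - 1
  · obtain ⟨i, hi⟩ := hex
    exact hsm i ℓ hℓ (Nat.dvd_gcd hi (hgcd.trans (Nat.gcd_dvd_right _ _)))
  push_neg at hex
  exfalso
  have hℓ2 := hℓ.two_le
  set j1 : Fin r := ⟨r - 2, by omega⟩ with hj1def
  set j2 : Fin r := ⟨r - 1, by omega⟩ with hj2def
  have hj12 : j1 ≠ j2 := by
    simp only [hj1def, hj2def, ne_eq, Fin.mk.injEq]
    omega
  have hd1 : ℓ ∣ d j1 := hgcd.trans (Nat.gcd_dvd_left _ _)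
  have hd2 : ℓ ∣ d j2 := by
    have hlt : ((j1 : ℕ) + 1) < r := by simp only [hj1def]; omega
    have heq : (⟨(j1 : ℕ) + 1, hlt⟩ : Fin r) = j2 := by
      simp only [hj1def, hj2def, Fin.mk.injEq]
      omega
    have := hdvd j1 hlt
    rw [heq] at this
    exact hd1.trans this
  obtain ⟨φ1, hφ1inj, hφ1pow⟩ := myZModAux ℓ (d j1) hℓ.pos (hd j1) hd1
  obtain ⟨φ2, hφ2inj, hφ2pow⟩ := myZModAux ℓ (d j2) hℓ.pos (hd j2) hd2
  -- index the factors of h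
  set f : Option (Fin k) → Polynomial F := fun o => o.elim g gi with hfdef
  have hfirr : ∀ o, Irreducible (f o) := by rintro (_ | i); exacts [hgirr, (hgi i).2]
  have hfmonic : ∀ o, (f o).Monic := by rintro (_ | i); exacts [hgmonic, (hgi i).1]
  have hfne : ∀ o o', o ≠ o' → f o ≠ f o' := by
    rintro (_ | i) (_ | i') hoo' <;> simp only [hfdef, Option.elim]
    · exact absurd rfl hoo'
    · exact fun he => hne i' he.symm
    · exact hne i
    · exact fun he => hoo' (congrArg some (hinj he))
  have hcop : ∀ o o', o ≠ o' → IsCoprime (f o) (f o') := by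
    intro o o' hoo'
    rw [(hfirr o).coprime_iff_not_dvd]
    intro hdvd'
    exact hfne o o' hoo'
      (Polynomial.eq_of_monic_of_associated (hfmonic o) (hfmonic o')
        ((hfirr o).associated_of_dvd (hfirr o') hdvd'))
  have hprod : h = ∏ o, f o := by
    rw [hfact, Fintype.prod_option]
    rfl
  have hspan : Ideal.span {h} = ⨅ o, Ideal.span {f o} := by
    rw [Ideal.iInf_span_singleton hcop, ← hprod]
  let e : (Polynomial F ⧸ Ideal.span {h}) ≃+* ∀ o, Polynomial F ⧸ Ideal.span {f o} :=
    (Ideal.quotEquivOfEq hspan).trans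
      (Ideal.quotientInfRingEquivPiQuotient _
        (fun {o o'} hoo' => (Ideal.isCoprime_span_singleton_iff _ _).mpr (hcop o o' hoo')))
  let E : (Polynomial F ⧸ Ideal.span {h})ˣ ≃* ∀ o, (Polynomial F ⧸ Ideal.span {f o})ˣ :=
    (Units.mapEquiv e.toMulEquiv).trans myPiUnits
  let ψ := hiso.some.symm
  set Φ : Fin ℓ × Fin ℓ → (∀ j, Multiplicative (ZMod (d j))) :=
    fun p => Pi.mulSingle j1 (φ1 p.1) * Pi.mulSingle j2 (φ2 p.2) with hΦdef
  have hΦeval1 : ∀ p, Φ p j1 = φ1 p.1 := by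
    intro p
    simp only [hΦdef, Pi.mul_apply, Pi.mulSingle_eq_same,
      Pi.mulSingle_eq_of_ne hj12, mul_one]
  have hΦeval2 : ∀ p, Φ p j2 = φ2 p.2 := by
    intro p
    simp only [hΦdef, Pi.mul_apply, Pi.mulSingle_eq_same,
      Pi.mulSingle_eq_of_ne hj12.symm, one_mul]
  have hΦinj : Function.Injective Φ := by
    intro p q hpq
    have h1 : φ1 p.1 = φ1 q.1 := by rw [← hΦeval1 p, ← hΦeval1 q, hpq]
    have h2 : φ2 p.2 = φ2 q.2 := by rw [← hΦeval2 p, ← hΦeval2 q, hpq]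
    exact Prod.ext (hφ1inj h1) (hφ2inj h2)
  have hΦpow : ∀ p, Φ p ^ ℓ = 1 := by
    intro p
    funext j
    simp only [hΦdef, Pi.pow_apply, Pi.mul_apply, Pi.one_apply, mul_pow]
    by_cases e1 : j = j1
    · subst e1
      rw [Pi.mulSingle_eq_same, Pi.mulSingle_eq_of_ne hj12, hφ1pow, one_pow, mul_one]
    · by_cases e2 : j = j2
      · subst e2
        rw [Pi.mulSingle_eq_same, Pi.mulSingle_eq_of_ne (Ne.symm ?hne2), hφ2pow, one_pow,
          one_mul]
        case hne2 => exact fun he => e1 he.symm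
      · rw [Pi.mulSingle_eq_of_ne e1, Pi.mulSingle_eq_of_ne e2, one_pow, one_mul]
  set χ : Fin ℓ × Fin ℓ → ∀ o, (Polynomial F ⧸ Ideal.span {f o})ˣ :=
    fun p => E ((ψ (Φ p) : H) : (Polynomial F ⧸ Ideal.span {h})ˣ) with hχdef
  have hχinj : Function.Injective χ := by
    intro p q hpq
    apply hΦinj
    apply ψ.injective
    apply Subtype.coe_injective
    exact E.injective hpq
  have hχpow : ∀ p, χ p ^ ℓ = 1 := by
    intro p
    have h1 : (ψ (Φ p)) ^ ℓ = 1 := by rw [← map_pow, hΦpow, map_one]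
    have h2 : ((ψ (Φ p) : H) : (Polynomial F ⧸ Ideal.span {h})ˣ) ^ ℓ = 1 := by
      rw [← SubmonoidClass.coe_pow, h1, OneMemClass.coe_one]
    rw [hχdef]
    simp only
    rw [← map_pow, h2, map_one]
  have hcomp1 : ∀ p i, χ p (some i) = 1 := by
    intro p i
    have hpow : (χ p (some i)) ^ ℓ = 1 := by
      have := congrFun (hχpow p) (some i)
      simpa using this
    have hcard : Nat.card (Polynomial F ⧸ Ideal.span {f (some i)})ˣ
        = Fintype.card F ^ (gi i).natDegree - 1 :=
      myCardUnits (gi i) (hgi i).1 (hgi i).2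
    rcases (Nat.dvd_prime hℓ).mp (orderOf_dvd_of_pow_eq_one hpow) with ho | ho
    · exact orderOf_eq_one_iff.mp ho
    · exfalso
      apply hex i
      rw [← hcard, ← ho]
      exact orderOf_dvd_natCard _
  -- the `none` component lands in the `ℓ`-th roots of unity of a finite field
  haveI : (Ideal.span {f (none : Option (Fin k))}).IsMaximal :=
    PrincipalIdealRing.isMaximal_of_irreducible (hfirr none)
  letI : Field (Polynomial F ⧸ Ideal.span {f (none : Option (Fin k))}) :=
    Ideal.Quotient.field _
  haveI : Finite (Polynomial F ⧸ Ideal.span {f (none : Option (Fin k))}) :=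
    myQuotFinite _ (hfmonic none)
  set τ : Fin ℓ × Fin ℓ →
      {u : (Polynomial F ⧸ Ideal.span {f (none : Option (Fin k))})ˣ // u ^ ℓ = 1} :=
    fun p => ⟨χ p none, by simpa using congrFun (hχpow p) none⟩ with hτdef
  have hτinj : Function.Injective τ := by
    intro p q hpq
    apply hχinj
    funext o
    cases o with
    | none => exact congrArg Subtype.val hpq
    | some i => rw [hcomp1 p i, hcomp1 q i]
  have hle : ℓ * ℓ ≤ ℓ := by
    calc ℓ * ℓ = Nat.card (Fin ℓ × Fin ℓ) := by simp [Nat.card_eq_fintype_card]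
      _ ≤ Nat.card {u : (Polynomial F ⧸ Ideal.span {f (none : Option (Fin k))})ˣ // u ^ ℓ = 1} :=
          Nat.card_le_card_of_injective τ hτinj
      _ ≤ ℓ := myCountRoots _ ℓ hℓ.pos
  nlinarith
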